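/- Let n ≥ 1. Let P be an n×n entrywise nonnegative matrix with row sums at most 1 and spectral radius ρ(P) < 1, and let p = (I − P)𝟙. Let B be an n×n entrywise nonnegative matrix and b ∈ ℝⁿ entrywise nonnegative with c_l·P ≤ B ≤ c_u·P and c_l·p ≤ b ≤ c_u·p entrywise for some 0 < c_l ≤ c_u. For z ∈ ℝⁿ with z ≥ 0 entrywise, define w_t = −B^t z − Σ_{k=0}^{t−1} B^k b. Then liminf_{t→∞} (w_t)_i > −∞ for every component i if and only if the spectral radius of B is strictly less than 1. -/

import Mathlib

set_option autoImplicit false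

open Finset Matrix Filter
open scoped Topology

/-- The spectral radius of a real square matrix: the maximum modulus of its complex
eigenvalues. -/
noncomputable def specRad {n : Type*} [Fintype n] [DecidableEq n] (M : Matrix n n ℝ) : ℝ :=
  sSup {x : ℝ | ∃ z : ℂ, z ∈ spectrum ℂ (M.map (Complex.ofReal : ℝ → ℂ)) ∧ x = ‖z‖}

section Aux

open scoped ENNReal NNReal

attribute [local instance] Matrix.linftyOpNormedAddCommGroup Matrix.linftyOpNormedRing
  Matrix.linftyOpNormedAlgebra

variable {n : ℕ}

private lemma specSet_eq (A : Matrix (Fin n) (Fin n) ℂ) :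
    {x : ℝ | ∃ z : ℂ, z ∈ spectrum ℂ A ∧ x = ‖z‖}
      = (fun z => ‖z‖) '' spectrum ℂ A := by
  ext x; simp [eq_comm, Set.mem_image]

private lemma map_pow_ofReal (M : Matrix (Fin n) (Fin n) ℝ) (k : ℕ) :
    (M.map (Complex.ofReal : ℝ → ℂ)) ^ k = (M ^ k).map Complex.ofReal := by
  have h : ∀ N : Matrix (Fin n) (Fin n) ℝ, N.map (Complex.ofReal : ℝ → ℂ)
      = Complex.ofRealHom.mapMatrix N := fun N => rfl
  rw [h, h, ← map_pow]

private lemma nnnorm_map_ofReal (M : Matrix (Fin n) (Fin n) ℝ) :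
    ‖M.map (Complex.ofReal : ℝ → ℂ)‖₊ = ‖M‖₊ := by
  simp [Matrix.linfty_opNNNorm_def, Matrix.map_apply]

private lemma exists_eigen (hn : 1 ≤ n) (M : Matrix (Fin n) (Fin n) ℝ) :
    ∃ (lam : ℂ) (v : Fin n → ℂ), v ≠ 0 ∧ (M.map Complex.ofReal) *ᵥ v = lam • v ∧
      ‖lam‖ = specRad M := by
  haveI : Nonempty (Fin n) := ⟨⟨0, hn⟩⟩
  set A := M.map (Complex.ofReal : ℝ → ℂ) with hA
  have hfin : ({x : ℝ | ∃ z : ℂ, z ∈ spectrum ℂ A ∧ x = ‖z‖}).Finite := by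
    rw [specSet_eq]; exact (Matrix.finite_spectrum A).image _
  have hne : ({x : ℝ | ∃ z : ℂ, z ∈ spectrum ℂ A ∧ x = ‖z‖}).Nonempty := by
    obtain ⟨z, hz⟩ := spectrum.nonempty A
    exact ⟨‖z‖, z, hz, rfl⟩
  obtain ⟨lam, hlam, habs⟩ := hne.csSup_mem hfin
  have hspec : lam ∈ spectrum ℂ (Matrix.toLinAlgEquiv' A) := by
    rwa [AlgEquiv.spectrum_eq]
  have hev : Module.End.HasEigenvalue (Matrix.toLinAlgEquiv' A) lam :=
    Module.End.hasEigenvalue_iff_mem_spectrum.mpr hspec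
  obtain ⟨v, hv⟩ := hev.exists_hasEigenvector
  refine ⟨lam, v, hv.2, ?_, habs.symm⟩
  have := hv.apply_eq_smul
  rwa [Matrix.toLinAlgEquiv'_apply] at this

private lemma spectralRadius_le_ofReal (M : Matrix (Fin n) (Fin n) ℝ) :
    spectralRadius ℂ (M.map (Complex.ofReal : ℝ → ℂ)) ≤ ENNReal.ofReal (specRad M) := by
  set A := M.map (Complex.ofReal : ℝ → ℂ)
  have hfin : ({x : ℝ | ∃ z : ℂ, z ∈ spectrum ℂ A ∧ x = ‖z‖}).Finite := by
    rw [specSet_eq]; exact (Matrix.finite_spectrum A).image _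
  rw [spectralRadius]
  refine iSup₂_le fun z hz => ?_
  have h1 : ‖z‖ ≤ specRad M := le_csSup hfin.bddAbove ⟨z, hz, rfl⟩
  rw [← enorm_eq_nnnorm, ← ofReal_norm]
  exact ENNReal.ofReal_le_ofReal h1

private lemma summable_norm_pow {M : Matrix (Fin n) (Fin n) ℝ} (h : specRad M < 1) :
    Summable (fun k : ℕ => ‖M ^ k‖) := by
  set A := M.map (Complex.ofReal : ℝ → ℂ) with hA
  have hρ : spectralRadius ℂ A < 1 :=
    (spectralRadius_le_ofReal M).trans_lt (by exact_mod_cast ENNReal.ofReal_lt_one.mpr h)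
  obtain ⟨r, hr1, hr2⟩ := exists_between hρ
  have hgel := spectrum.pow_nnnorm_pow_one_div_tendsto_nhds_spectralRadius A
  have hev : ∀ᶠ k : ℕ in atTop, (‖A ^ k‖₊ : ℝ≥0∞) ^ (1 / (k : ℝ)) < r :=
    hgel.eventually_lt_const hr1
  obtain ⟨N, hN⟩ := (hev.and (eventually_ge_atTop 1)).exists_forall_of_atTop
  have hrtop : r ≠ ⊤ := (hr2.trans_le le_top).ne
  set r' : ℝ := r.toReal with hr'
  have hr'0 : 0 ≤ r' := ENNReal.toReal_nonneg
  have hr'1 : r' < 1 := by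
    rw [hr', ← ENNReal.toReal_one]
    exact ENNReal.toReal_strict_mono ENNReal.one_ne_top hr2
  have hbound : ∀ k, N ≤ k → ‖M ^ k‖ ≤ r' ^ k := by
    intro k hk
    obtain ⟨h1, h2⟩ := hN k hk
    have hk0 : (k : ℝ) ≠ 0 := by positivity
    have hle : ((‖A ^ k‖₊ : ℝ≥0∞) ^ (1 / (k : ℝ))) ^ (k : ℝ) ≤ r ^ (k : ℝ) :=
      ENNReal.rpow_le_rpow h1.le (by positivity)
    rw [← ENNReal.rpow_mul, one_div, inv_mul_cancel₀ hk0, ENNReal.rpow_one,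
      ENNReal.rpow_natCast] at hle
    have hle2 := ENNReal.toReal_mono (by simp [ENNReal.pow_ne_top hrtop]) hle
    rw [ENNReal.coe_toReal, ENNReal.toReal_pow] at hle2
    rwa [← hr', coe_nnnorm, hA, map_pow_ofReal, ← coe_nnnorm, nnnorm_map_ofReal, coe_nnnorm]
      at hle2
  have hs : Summable (fun k : ℕ => ‖M ^ (k + N)‖) := by
    refine Summable.of_nonneg_of_le (fun k => norm_nonneg _)
      (fun k => hbound (k + N) (le_add_self)) ?_
    have hgeo : Summable (fun k : ℕ => r' ^ N * r' ^ k) :=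
      (summable_geometric_of_lt_one hr'0 hr'1).mul_left _
    refine hgeo.congr fun k => ?_
    rw [← pow_add, add_comm]
  exact (summable_nat_add_iff N).mp hs

private lemma pow_entry_nonneg {M : Matrix (Fin n) (Fin n) ℝ} (h : ∀ i j, 0 ≤ M i j) :
    ∀ k i j, 0 ≤ (M ^ k) i j := by
  intro k
  induction k with
  | zero =>
    intro i j
    simp only [pow_zero, Matrix.one_apply]
    split <;> norm_num
  | succ k ih =>
    intro i j
    rw [pow_succ, Matrix.mul_apply]
    exact Finset.sum_nonneg fun l _ => mul_nonneg (ih i l) (h l j)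

private lemma pow_entry_lower {P M : Matrix (Fin n) (Fin n) ℝ} {cl : ℝ} (hcl : 0 ≤ cl)
    (hP0 : ∀ i j, 0 ≤ P i j) (hBl : ∀ i j, cl * P i j ≤ M i j) :
    ∀ k i j, cl ^ k * (P ^ k) i j ≤ (M ^ k) i j := by
  have hM0 : ∀ i j, 0 ≤ M i j := fun i j =>
    le_trans (mul_nonneg hcl (hP0 i j)) (hBl i j)
  intro k
  induction k with
  | zero => intro i j; simp
  | succ k ih =>
    intro i j
    simp only [pow_succ, Matrix.mul_apply, Finset.mul_sum]
    refine Finset.sum_le_sum fun l _ => ?_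
    have h1 : cl ^ k * (P ^ k) i l ≤ (M ^ k) i l := ih i l
    have h2 : cl * P l j ≤ M l j := hBl l j
    calc cl ^ (k + 1) * ((P ^ k) i l * P l j)
        = (cl ^ k * (P ^ k) i l) * (cl * P l j) := by ring
      _ ≤ (M ^ k) i l * (M l j) := by
          refine mul_le_mul h1 h2 (mul_nonneg hcl (hP0 l j)) ?_
          exact pow_entry_nonneg hM0 k i l

private lemma one_le_sum_pow (hn : 1 ≤ n) {M : Matrix (Fin n) (Fin n) ℝ}
    (hM0 : ∀ i j, 0 ≤ M i j) (h : 1 ≤ specRad M) (k : ℕ) :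
    (1 : ℝ) ≤ ∑ i, ∑ j, (M ^ k) i j := by
  haveI : Nonempty (Fin n) := ⟨⟨0, hn⟩⟩
  obtain ⟨lam, v, hv0, hev, habs⟩ := exists_eigen hn M
  set A := M.map (Complex.ofReal : ℝ → ℂ) with hA
  have hpow : ∀ m : ℕ, (A ^ m) *ᵥ v = lam ^ m • v := by
    intro m
    induction m with
    | zero => simp
    | succ m ih =>
      rw [pow_succ', ← Matrix.mulVec_mulVec, ih, Matrix.mulVec_smul, hev, smul_smul, ← pow_succ]
  obtain ⟨j0, -, hj0⟩ := Finset.exists_max_image Finset.univ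
    (fun j => ‖v j‖) Finset.univ_nonempty
  have hvpos : 0 < ‖v j0‖ := by
    rcases (norm_nonneg (v j0)).lt_or_eq with h' | h'
    · exact h'
    · exfalso; apply hv0; funext j
      have := hj0 j (Finset.mem_univ j)
      rw [← h'] at this
      exact norm_eq_zero.mp (le_antisymm this (norm_nonneg _))
  have hcomp := congrFun (hpow k) j0
  have habs2 : ‖lam‖ ^ k * ‖v j0‖
      ≤ (∑ j, (M ^ k) j0 j) * ‖v j0‖ := by
    have hLHS : ‖lam‖ ^ k * ‖v j0‖
        = ‖((A ^ k) *ᵥ v) j0‖ := by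
      rw [hcomp, Pi.smul_apply, smul_eq_mul, norm_mul, norm_pow]
    rw [hLHS]
    have hsum : ((A ^ k) *ᵥ v) j0 = ∑ j, ((M ^ k) j0 j : ℂ) * v j := by
      rw [hA, map_pow_ofReal]
      simp [Matrix.mulVec, dotProduct, Matrix.map_apply]
    rw [hsum]
    calc ‖∑ j, ((M ^ k) j0 j : ℂ) * v j‖
        ≤ ∑ j, ‖((M ^ k) j0 j : ℂ) * v j‖ := norm_sum_le _ _
      _ = ∑ j, (M ^ k) j0 j * ‖v j‖ := by
          refine Finset.sum_congr rfl fun j _ => ?_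
          rw [norm_mul, Complex.norm_real, Real.norm_eq_abs, abs_of_nonneg (pow_entry_nonneg hM0 k j0 j)]
      _ ≤ ∑ j, (M ^ k) j0 j * ‖v j0‖ := by
          refine Finset.sum_le_sum fun j _ => ?_
          exact mul_le_mul_of_nonneg_left (hj0 j (Finset.mem_univ j))
            (pow_entry_nonneg hM0 k j0 j)
      _ = (∑ j, (M ^ k) j0 j) * ‖v j0‖ := by rw [Finset.sum_mul]
  have hlam1 : 1 ≤ ‖lam‖ ^ k := one_le_pow₀ (by rw [habs]; exact h)
  have hrow : 1 ≤ ∑ j, (M ^ k) j0 j := by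
    have := le_of_mul_le_mul_right (le_trans
      (mul_le_mul_of_nonneg_right hlam1 hvpos.le) habs2) hvpos
    simpa using this
  calc (1 : ℝ) ≤ ∑ j, (M ^ k) j0 j := hrow
    _ ≤ ∑ i, ∑ j, (M ^ k) i j := by
        refine Finset.single_le_sum (f := fun i => ∑ j, (M ^ k) i j) ?_ (Finset.mem_univ j0)
        exact fun i _ => Finset.sum_nonneg fun j _ => pow_entry_nonneg hM0 k i j

end Aux

section Main

open scoped ENNReal NNReal

attribute [local instance] Matrix.linftyOpNormedAddCommGroup Matrix.linftyOpNormedRing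
  Matrix.linftyOpNormedAlgebra

/-- A stationary policy's exponential value iterates
`w_t = −B^t z − Σ_{k<t} B^k b` (for a terminal exponential value `−z` with `z ≥ 0`) have all
components with `liminf > −∞` if and only if the spectral radius of `B` is strictly less
than `1`, where `B, b` are sandwiched between multiples of the transient substochastic
matrix `P` and its termination vector `p = (I−P)𝟙`. -/
theorem exp_value_bounded_iff_specRad_lt_one (n : ℕ) (hn : 1 ≤ n)
    (P B : Matrix (Fin n) (Fin n) ℝ) (b z : Fin n → ℝ) (cl cu : ℝ)
    (hcl : 0 < cl) (hclu : cl ≤ cu)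
    (hP0 : ∀ i j, 0 ≤ P i j) (hProw : ∀ i, ∑ j, P i j ≤ 1) (hPspec : specRad P < 1)
    (hB0 : ∀ i j, 0 ≤ B i j) (hb0 : ∀ i, 0 ≤ b i)
    (hBl : ∀ i j, cl * P i j ≤ B i j) (hBu : ∀ i j, B i j ≤ cu * P i j)
    (hbl : ∀ i, cl * ((1 - P) *ᵥ (fun _ => (1 : ℝ))) i ≤ b i)
    (hbu : ∀ i, b i ≤ cu * ((1 - P) *ᵥ (fun _ => (1 : ℝ))) i)
    (hz : ∀ i, 0 ≤ z i) :
    (∀ i : Fin n, (⊥ : EReal) < Filter.liminf (fun t : ℕ =>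
        (((-((B ^ t) *ᵥ z) - ∑ k ∈ Finset.range t, (B ^ k) *ᵥ b) i : ℝ) : EReal))
      Filter.atTop) ↔ specRad B < 1 := by
  haveI : Nonempty (Fin n) := ⟨⟨0, hn⟩⟩
  have hBpow0 : ∀ k i j, 0 ≤ (B ^ k) i j := fun k i j => pow_entry_nonneg hB0 k i j
  have hPpow0 : ∀ k i j, 0 ≤ (P ^ k) i j := fun k i j => pow_entry_nonneg hP0 k i j
  have happ : ∀ (t : ℕ) (i : Fin n),
      (-((B ^ t) *ᵥ z) - ∑ k ∈ Finset.range t, (B ^ k) *ᵥ b) i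
        = -(((B ^ t) *ᵥ z) i) - ∑ k ∈ Finset.range t, ((B ^ k) *ᵥ b) i := by
    intro t i
    simp [Finset.sum_apply]
  constructor
  · -- if all liminfs are finite then specRad B < 1
    intro hall
    by_contra hρ
    push_neg at hρ
    -- total entry sums of powers are at least 1
    have hone : ∀ k, (1 : ℝ) ≤ ∑ i, ∑ j, (B ^ k) i j :=
      fun k => one_le_sum_pow hn hB0 hρ k
    have hgsum : ∀ t : ℕ, (t : ℝ) ≤ ∑ k ∈ Finset.range t, ∑ i, ∑ j, (B ^ k) i j := by
      intro t
      calc (t : ℝ) = ∑ _k ∈ Finset.range t, (1 : ℝ) := by simp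
        _ ≤ _ := Finset.sum_le_sum fun k _ => hone k
    have hswap : ∀ t : ℕ, ∑ k ∈ Finset.range t, ∑ i, ∑ j, (B ^ k) i j
        = ∑ i, ∑ j, ∑ k ∈ Finset.range t, (B ^ k) i j := by
      intro t
      rw [Finset.sum_comm]
      exact Finset.sum_congr rfl fun i _ => Finset.sum_comm
    -- some entry has unbounded partial sums
    have hgu : ∃ i j, ¬ BddAbove (Set.range fun t => ∑ k ∈ Finset.range t, (B ^ k) i j) := by
      by_contra hb'
      push_neg at hb'
      choose Mf hMf using hb'
      have hcon : ∀ t : ℕ, (t : ℝ) ≤ ∑ i, ∑ j, Mf i j := by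
        intro t
        refine le_trans (le_trans (hgsum t) (le_of_eq (hswap t))) ?_
        exact Finset.sum_le_sum fun i _ => Finset.sum_le_sum fun j _ =>
          hMf i j (Set.mem_range_self t)
      set Mtot := ∑ i, ∑ j, Mf i j with hMtot
      have h1 := hcon (⌈Mtot⌉₊ + 1)
      have h2 : Mtot < ((⌈Mtot⌉₊ + 1 : ℕ) : ℝ) := by
        push_cast
        have := Nat.le_ceil Mtot
        linarith
      linarith
    obtain ⟨i0, j0, hdiv⟩ := hgu
    have hgmono : Monotone (fun t => ∑ k ∈ Finset.range t, (B ^ k) i0 j0) := by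
      intro t1 t2 h
      exact Finset.sum_le_sum_of_subset_of_nonneg (Finset.range_subset_range.mpr h)
        (fun k _ _ => hBpow0 k i0 j0)
    have hg_tendsto := tendsto_atTop_atTop_of_monotone' hgmono hdiv
    -- find m, j1 with positive path
    have hPs : Summable (fun k : ℕ => ‖P ^ k‖) := summable_norm_pow hPspec
    have hPz : Tendsto (fun t : ℕ => ‖P ^ t‖) atTop (𝓝 0) := hPs.tendsto_atTop_zero
    obtain ⟨T, hT⟩ := (hPz.eventually_lt_const one_pos).exists
    have hp0 : ∀ j, 0 ≤ ((1 - P) *ᵥ (fun _ => (1 : ℝ))) j := by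
      intro j
      rw [Matrix.sub_mulVec, Matrix.one_mulVec, Pi.sub_apply]
      have : (P *ᵥ (fun _ => (1 : ℝ))) j = ∑ l, P j l := by
        simp [Matrix.mulVec, dotProduct]
      rw [this]
      have := hProw j
      linarith
    have htel : ∑ m ∈ Finset.range T, ((P ^ m) *ᵥ ((1 - P) *ᵥ (fun _ => (1 : ℝ)))) j0
        = 1 - ((P ^ T) *ᵥ (fun _ => (1 : ℝ))) j0 := by
      have hterm : ∀ m : ℕ, ((P ^ m) *ᵥ ((1 - P) *ᵥ (fun _ => (1 : ℝ)))) j0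
          = ((P ^ m) *ᵥ (fun _ => (1 : ℝ))) j0 - ((P ^ (m + 1)) *ᵥ (fun _ => (1 : ℝ))) j0 := by
        intro m
        rw [Matrix.mulVec_mulVec, Matrix.mul_sub, Matrix.mul_one, ← pow_succ,
          Matrix.sub_mulVec, Pi.sub_apply]
      rw [Finset.sum_congr rfl fun m _ => hterm m]
      rw [Finset.sum_range_sub' (f := fun m => ((P ^ m) *ᵥ (fun _ => (1 : ℝ))) j0)]
      simp [Matrix.one_mulVec]
    have hPT1 : ((P ^ T) *ᵥ (fun _ => (1 : ℝ))) j0 < 1 := by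
      calc ((P ^ T) *ᵥ (fun _ => (1 : ℝ))) j0
          ≤ |((P ^ T) *ᵥ (fun _ => (1 : ℝ))) j0| := le_abs_self _
        _ ≤ ‖(P ^ T) *ᵥ (fun _ => (1 : ℝ))‖ := by
            simpa [Real.norm_eq_abs] using norm_le_pi_norm ((P ^ T) *ᵥ (fun _ => (1 : ℝ))) j0
        _ ≤ ‖P ^ T‖ * ‖(fun _ : Fin n => (1 : ℝ))‖ := Matrix.linfty_opNorm_mulVec _ _
        _ = ‖P ^ T‖ := by rw [pi_norm_const]; simp
        _ < 1 := hT
    have hsum_pos : 0 < ∑ m ∈ Finset.range T,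
        ((P ^ m) *ᵥ ((1 - P) *ᵥ (fun _ => (1 : ℝ)))) j0 := by
      rw [htel]; linarith
    have hexm : ∃ m, 0 < ((P ^ m) *ᵥ ((1 - P) *ᵥ (fun _ => (1 : ℝ)))) j0 := by
      by_contra hc
      push_neg at hc
      have := Finset.sum_nonpos (fun m (_ : m ∈ Finset.range T) => hc m)
      linarith
    obtain ⟨m, hm⟩ := hexm
    have hmsum : ((P ^ m) *ᵥ ((1 - P) *ᵥ (fun _ => (1 : ℝ)))) j0
        = ∑ j, (P ^ m) j0 j * ((1 - P) *ᵥ (fun _ => (1 : ℝ))) j := by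
      simp [Matrix.mulVec, dotProduct]
    have hexj : ∃ j1, 0 < (P ^ m) j0 j1 * ((1 - P) *ᵥ (fun _ => (1 : ℝ))) j1 := by
      by_contra hc
      push_neg at hc
      have := Finset.sum_nonpos (fun j (_ : j ∈ Finset.univ) => hc j)
      rw [← hmsum] at this
      linarith
    obtain ⟨j1, hj1⟩ := hexj
    have hPm_pos : 0 < (P ^ m) j0 j1 ∧ 0 < ((1 - P) *ᵥ (fun _ => (1 : ℝ))) j1 := by
      rcases mul_pos_iff.mp hj1 with ⟨h1, h2⟩ | ⟨h1, h2⟩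
      · exact ⟨h1, h2⟩
      · exact absurd h1 (not_lt.mpr (hPpow0 m j0 j1))
    have hBm_pos : 0 < (B ^ m) j0 j1 :=
      lt_of_lt_of_le (mul_pos (pow_pos hcl m) hPm_pos.1) (pow_entry_lower hcl.le hP0 hBl m j0 j1)
    have hb1_pos : 0 < b j1 := by
      exact lt_of_lt_of_le (mul_pos hcl hPm_pos.2) (hbl j1)
    set c0 : ℝ := (B ^ m) j0 j1 * b j1 with hc0def
    have hc0 : 0 < c0 := mul_pos hBm_pos hb1_pos
    have hkey : ∀ k : ℕ, c0 * (B ^ k) i0 j0 ≤ ((B ^ (m + k)) *ᵥ b) i0 := by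
      intro k
      have he : B ^ (m + k) = B ^ k * B ^ m := by rw [add_comm, pow_add]
      have h1 : (B ^ k) i0 j0 * (B ^ m) j0 j1 ≤ (B ^ (m + k)) i0 j1 := by
        rw [he, Matrix.mul_apply]
        exact Finset.single_le_sum (f := fun l => (B ^ k) i0 l * (B ^ m) l j1)
          (fun l _ => mul_nonneg (hBpow0 k i0 l) (hBpow0 m l j1)) (Finset.mem_univ j0)
      have h2 : (B ^ (m + k)) i0 j1 * b j1 ≤ ((B ^ (m + k)) *ᵥ b) i0 := by
        have : ((B ^ (m + k)) *ᵥ b) i0 = ∑ j, (B ^ (m + k)) i0 j * b j := by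
          simp [Matrix.mulVec, dotProduct]
        rw [this]
        exact Finset.single_le_sum (f := fun j => (B ^ (m + k)) i0 j * b j)
          (fun j _ => mul_nonneg (hBpow0 _ i0 j) (hb0 j)) (Finset.mem_univ j1)
      calc c0 * (B ^ k) i0 j0 = ((B ^ k) i0 j0 * (B ^ m) j0 j1) * b j1 := by
            rw [hc0def]; ring
        _ ≤ (B ^ (m + k)) i0 j1 * b j1 := mul_le_mul_of_nonneg_right h1 (hb0 j1)
        _ ≤ ((B ^ (m + k)) *ᵥ b) i0 := h2
    set s : ℕ → ℝ := fun t => ∑ k ∈ Finset.range t, ((B ^ k) *ᵥ b) i0 with hsdef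
    have hterm_nonneg : ∀ k, 0 ≤ ((B ^ k) *ᵥ b) i0 := by
      intro k
      have : ((B ^ k) *ᵥ b) i0 = ∑ j, (B ^ k) i0 j * b j := by
        simp [Matrix.mulVec, dotProduct]
      rw [this]
      exact Finset.sum_nonneg fun j _ => mul_nonneg (hBpow0 k i0 j) (hb0 j)
    have hshift : ∀ t : ℕ, c0 * (∑ k ∈ Finset.range t, (B ^ k) i0 j0) ≤ s (m + t) := by
      intro t
      have hsub : Finset.Ico m (m + t) ⊆ Finset.range (m + t) := by
        rw [Finset.range_eq_Ico]
        exact Finset.Ico_subset_Ico (Nat.zero_le m) le_rfl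
      have h1 : ∑ k ∈ Finset.Ico m (m + t), ((B ^ k) *ᵥ b) i0 ≤ s (m + t) :=
        Finset.sum_le_sum_of_subset_of_nonneg hsub (fun k _ _ => hterm_nonneg k)
      have h2 : ∑ k ∈ Finset.Ico m (m + t), ((B ^ k) *ᵥ b) i0
          = ∑ k ∈ Finset.range t, ((B ^ (m + k)) *ᵥ b) i0 := by
        rw [Finset.sum_Ico_eq_sum_range]
        simp
      rw [Finset.mul_sum]
      calc ∑ k ∈ Finset.range t, c0 * (B ^ k) i0 j0
          ≤ ∑ k ∈ Finset.range t, ((B ^ (m + k)) *ᵥ b) i0 :=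
            Finset.sum_le_sum fun k _ => hkey k
        _ = ∑ k ∈ Finset.Ico m (m + t), ((B ^ k) *ᵥ b) i0 := h2.symm
        _ ≤ s (m + t) := h1
    have hs_unb : ¬ BddAbove (Set.range s) := by
      rintro ⟨Mb, hMb⟩
      apply hdiv
      refine ⟨Mb / c0, ?_⟩
      rintro x ⟨t, rfl⟩
      have h1 := hshift t
      have h2 : s (m + t) ≤ Mb := hMb (Set.mem_range_self _)
      rw [le_div_iff₀ hc0]
      calc (∑ k ∈ Finset.range t, (B ^ k) i0 j0) * c0
          = c0 * ∑ k ∈ Finset.range t, (B ^ k) i0 j0 := by ring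
        _ ≤ s (m + t) := h1
        _ ≤ Mb := h2
    have hs_mono : Monotone s := by
      intro t1 t2 h
      exact Finset.sum_le_sum_of_subset_of_nonneg (Finset.range_subset_range.mpr h)
        (fun k _ _ => hterm_nonneg k)
    have hs_tendsto : Tendsto s atTop atTop := tendsto_atTop_atTop_of_monotone' hs_mono hs_unb
    have hle : ∀ t : ℕ,
        ((-((B ^ t) *ᵥ z) - ∑ k ∈ Finset.range t, (B ^ k) *ᵥ b) i0 : ℝ) ≤ - s t := by
      intro t
      rw [happ]
      have hz' : 0 ≤ ((B ^ t) *ᵥ z) i0 := by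
        have : ((B ^ t) *ᵥ z) i0 = ∑ j, (B ^ t) i0 j * z j := by
          simp [Matrix.mulVec, dotProduct]
        rw [this]
        exact Finset.sum_nonneg fun j _ => mul_nonneg (hBpow0 t i0 j) (hz j)
      simp only [hsdef]
      linarith
    have htb : Tendsto (fun t => ((- s t : ℝ) : EReal)) atTop (𝓝 ⊥) := by
      rw [EReal.tendsto_nhds_bot_iff_real]
      intro x
      filter_upwards [hs_tendsto.eventually_gt_atTop (-x)] with t ht
      exact_mod_cast (by linarith : (-(s t) : ℝ) < x)
    have hliminf_le : Filter.liminf (fun t : ℕ =>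
        (((-((B ^ t) *ᵥ z) - ∑ k ∈ Finset.range t, (B ^ k) *ᵥ b) i0 : ℝ) : EReal))
        Filter.atTop ≤ ⊥ := by
      rw [← htb.liminf_eq]
      refine Filter.liminf_le_liminf (Filter.Eventually.of_forall fun t => ?_)
      exact_mod_cast hle t
    exact absurd (hall i0) (not_lt.mpr hliminf_le)
  · -- if specRad B < 1 then all liminfs are finite
    intro hρ i
    have hsum : Summable (fun k : ℕ => ‖B ^ k‖) := summable_norm_pow hρ
    set C : ℝ := ∑' k, ‖B ^ k‖ with hC
    have hCt : ∀ t, ‖B ^ t‖ ≤ C := fun t =>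
      hsum.le_tsum t (fun j _ => norm_nonneg _)
    have hCs : ∀ t, ∑ k ∈ Finset.range t, ‖B ^ k‖ ≤ C := fun t =>
      Summable.sum_le_tsum (Finset.range t) (fun k _ => norm_nonneg _) hsum
    have hbd : ∀ t : ℕ, -(C * ‖z‖ + C * ‖b‖)
        ≤ ((-((B ^ t) *ᵥ z) - ∑ k ∈ Finset.range t, (B ^ k) *ᵥ b) i : ℝ) := by
      intro t
      rw [happ]
      have h1 : ((B ^ t) *ᵥ z) i ≤ C * ‖z‖ := by
        calc ((B ^ t) *ᵥ z) i ≤ |((B ^ t) *ᵥ z) i| := le_abs_self _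
          _ ≤ ‖(B ^ t) *ᵥ z‖ := by
              simpa [Real.norm_eq_abs] using norm_le_pi_norm ((B ^ t) *ᵥ z) i
          _ ≤ ‖B ^ t‖ * ‖z‖ := Matrix.linfty_opNorm_mulVec _ _
          _ ≤ C * ‖z‖ := mul_le_mul_of_nonneg_right (hCt t) (norm_nonneg z)
      have h2 : ∑ k ∈ Finset.range t, ((B ^ k) *ᵥ b) i ≤ C * ‖b‖ := by
        calc ∑ k ∈ Finset.range t, ((B ^ k) *ᵥ b) i
            ≤ ∑ k ∈ Finset.range t, ‖B ^ k‖ * ‖b‖ := by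
              refine Finset.sum_le_sum fun k _ => ?_
              calc ((B ^ k) *ᵥ b) i ≤ |((B ^ k) *ᵥ b) i| := le_abs_self _
                _ ≤ ‖(B ^ k) *ᵥ b‖ := by
                    simpa [Real.norm_eq_abs] using norm_le_pi_norm ((B ^ k) *ᵥ b) i
                _ ≤ ‖B ^ k‖ * ‖b‖ := Matrix.linfty_opNorm_mulVec _ _
          _ = (∑ k ∈ Finset.range t, ‖B ^ k‖) * ‖b‖ := by rw [Finset.sum_mul]
          _ ≤ C * ‖b‖ := mul_le_mul_of_nonneg_right (hCs t) (norm_nonneg b)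
      linarith
    refine lt_of_lt_of_le (EReal.bot_lt_coe (-(C * ‖z‖ + C * ‖b‖))) ?_
    refine Filter.le_liminf_of_le ?_ (Filter.Eventually.of_forall fun t => ?_)
    · isBoundedDefault
    · exact_mod_cast hbd t

end Main
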